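/- The map ν sending π ∈ S_n to its stat table s₁s₂⋯sₙ is a bijection from S_n onto E_n = {w₁⋯wₙ : 0 ≤ w_i ≤ i-1}. -/

import Mathlib

namespace BS

/-- `l` is (the one-line notation of) a permutation of `{1,...,n}`. -/
def isPerm (l : List ℕ) (n : ℕ) : Prop := l.Perm ((List.range n).map (· + 1))

/-- number of inversions -/
def inv (l : List ℕ) : ℕ :=
  ((Finset.range l.length ×ˢ Finset.range l.length).filter
    (fun p => p.1 < p.2 ∧ l.getD p.2 0 < l.getD p.1 0)).card

/-- the set of (0-indexed) descent positions -/
def desSet (l : List ℕ) : Finset ℕ :=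
  (Finset.range (l.length - 1)).filter (fun i => l.getD (i + 1) 0 < l.getD i 0)

def des (l : List ℕ) : ℕ := (desSet l).card

/-- major index: sum of the (1-indexed) descent positions -/
def maj (l : List ℕ) : ℕ := ∑ i ∈ desSet l, (i + 1)

/-- number of occurrences of the generalized pattern ac-b (132, first two letters adjacent) -/
def acb (l : List ℕ) : ℕ :=
  ((Finset.range l.length ×ˢ Finset.range l.length).filter
    (fun p => p.1 + 2 ≤ p.2 ∧ l.getD p.1 0 < l.getD p.2 0 ∧ l.getD p.2 0 < l.getD (p.1 + 1) 0)).card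

/-- number of occurrences of the generalized pattern ba-c (213, first two letters adjacent) -/
def bac (l : List ℕ) : ℕ :=
  ((Finset.range l.length ×ˢ Finset.range l.length).filter
    (fun p => p.1 + 2 ≤ p.2 ∧ l.getD (p.1 + 1) 0 < l.getD p.1 0 ∧ l.getD p.1 0 < l.getD p.2 0)).card

/-- number of occurrences of the generalized pattern cb-a (321, first two letters adjacent) -/
def cba (l : List ℕ) : ℕ :=
  ((Finset.range l.length ×ˢ Finset.range l.length).filter
    (fun p => p.1 + 2 ≤ p.2 ∧ l.getD p.2 0 < l.getD (p.1 + 1) 0 ∧ l.getD (p.1 + 1) 0 < l.getD p.1 0)).card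

/-- Babson–Steingrímsson's statistic stat = (ac-b)+(ba-c)+(cb-a)+(ba) -/
def stat (l : List ℕ) : ℕ := acb l + bac l + cba l + des l

/-- first letter -/
def F (l : List ℕ) : ℕ := l.headD 0

/-- insertion space `j` (i.e. between letters `j-1` and `j`, 0-indexed) is a descent space -/
def isDescSpace (σ : List ℕ) (j : ℕ) : Prop :=
  1 ≤ j ∧ j < σ.length ∧ σ.getD j 0 < σ.getD (j - 1) 0

instance (σ : List ℕ) (j : ℕ) : Decidable (isDescSpace σ j) := by
  unfold isDescSpace; infer_instance

def isAscSpace (σ : List ℕ) (j : ℕ) : Prop :=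
  1 ≤ j ∧ j < σ.length ∧ σ.getD (j - 1) 0 < σ.getD j 0

instance (σ : List ℕ) (j : ℕ) : Decidable (isAscSpace σ j) := by
  unfold isAscSpace; infer_instance

/-- maj-labeling of the insertion spaces `0,...,σ.length`: the final space gets `0`,
descent spaces get `1,...,des σ` from right to left, the remaining spaces get
`des σ + 1, ...` from left to right. -/
def majLabel (σ : List ℕ) (j : ℕ) : ℕ :=
  if j = σ.length then 0
  else if isDescSpace σ j then
    1 + ((Finset.Ico (j + 1) σ.length).filter (fun t => isDescSpace σ t)).card
  else des σ + 1 + ((Finset.range j).filter (fun t => ¬ isDescSpace σ t)).card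

/-- stat-labeling of the insertion spaces: descent spaces and the final space get
`0,...,des σ` from left to right, the initial space gets `des σ + 1`, and ascent
spaces get `des σ + 2, ...` from right to left. -/
def statLabel (σ : List ℕ) (j : ℕ) : ℕ :=
  if j = σ.length then des σ
  else if isDescSpace σ j then ((Finset.range j).filter (fun t => isDescSpace σ t)).card
  else if j = 0 then des σ + 1
  else des σ + 1 + ((Finset.Ico j σ.length).filter (fun t => isAscSpace σ t)).card

/-- index of the insertion space carrying label `i` in the labeling `lab` -/
def spaceOfLabel (lab : List ℕ → ℕ → ℕ) (σ : List ℕ) (i : ℕ) : ℕ :=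
  ((List.range (σ.length + 1)).find? (fun j => decide (lab σ j = i))).getD 0

/-- insert `v` at the space with inv-label `i` (spaces labeled from right to left) -/
def insertAtInvLabel (i : ℕ) (σ : List ℕ) (v : ℕ) : List ℕ :=
  σ.insertIdx (σ.length - i) v

def insertAtMajLabel (i : ℕ) (σ : List ℕ) (v : ℕ) : List ℕ :=
  σ.insertIdx (spaceOfLabel majLabel σ i) v

def insertAtStatLabel (i : ℕ) (σ : List ℕ) (v : ℕ) : List ℕ :=
  σ.insertIdx (spaceOfLabel statLabel σ i) v

/-- inversion table: `c_i` is the inv-label of the space of `π⁽ⁱ⁻¹⁾` that letter `i` occupies -/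
def invTable (π : List ℕ) : List ℕ :=
  (List.range π.length).map (fun k =>
    if k = 0 then 0
    else (π.filter (· ≤ k)).length - (π.filter (· ≤ k + 1)).idxOf (k + 1))

/-- major index table -/
def majTable (π : List ℕ) : List ℕ :=
  (List.range π.length).map (fun k =>
    if k = 0 then 0
    else majLabel (π.filter (· ≤ k)) ((π.filter (· ≤ k + 1)).idxOf (k + 1)))

/-- stat table -/
def statTable (π : List ℕ) : List ℕ :=
  (List.range π.length).map (fun k =>
    if k = 0 then 0
    else statLabel (π.filter (· ≤ k)) ((π.filter (· ≤ k + 1)).idxOf (k + 1)))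

/-- `w ∈ E_n`, i.e. `w = w₁⋯wₙ` with `0 ≤ wᵢ ≤ i - 1` -/
def memE (w : List ℕ) (n : ℕ) : Prop :=
  w.length = n ∧ ∀ k < n, w.getD k 0 ≤ k

/-- the map ρ : complement-reverse `π⁽ᵏ⁾` (k the first letter) behind its first letter,
then reinsert `k+1,…,n` at the maj-labels given by the stat table of `π`. -/
def rho (π : List ℕ) : List ℕ :=
  let n := π.length
  let k := π.headD 0
  let s := statTable π
  (List.range (n - k)).foldl
    (fun σ m => insertAtMajLabel (s.getD (k + m) 0) σ (k + m + 1))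
    (k :: (((π.filter (· ≤ k)).tail.map (fun x => k - x)).reverse))

/-- the finset of one-line notations of permutations of `{1,…,n}` -/
def perms (n : ℕ) : Finset (List ℕ) :=
  (((List.range n).map (· + 1)).permutations).toFinset

/-- the q-factorial `[n]_q!` -/
def qFact {R : Type*} [CommSemiring R] (q : R) (n : ℕ) : R :=
  ∏ k ∈ Finset.range n, ∑ j ∈ Finset.range (k + 1), q ^ j

end BS

namespace BSAux
open BS

theorem insertIdx_eq_take_cons_drop {α} (v : α) (l : List α) {n : ℕ} (h : n ≤ l.length) :
    l.insertIdx n v = l.take n ++ v :: l.drop n := by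
  induction l generalizing n with
  | nil => simp_all
  | cons a t ih =>
    cases n with
    | zero => simp
    | succ m => simp [List.insertIdx_succ_cons, ih (by simpa using h)]

theorem eq_take_cons_drop {α} (l : List α) {i : ℕ} (h : i < l.length) :
    l = l.take i ++ l[i] :: l.drop (i + 1) := by
  conv_lhs => rw [← List.take_append_drop i l]
  rw [List.drop_eq_getElem_cons h]

theorem indexOf_middle {v : ℕ} {l1 l2 : List ℕ} (hv : v ∉ l1) :
    (l1 ++ v :: l2).idxOf v = l1.length := by
  induction l1 with
  | nil => simp
  | cons a t ih =>
    simp only [List.mem_cons, not_or] at hv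
    simp [List.idxOf_cons_ne _ (fun h => hv.1 h.symm), ih hv.2]

theorem filter_insertIdx {p : ℕ → Bool} {v : ℕ} {σ : List ℕ} {j : ℕ}
    (hv : p v = false) (h : j ≤ σ.length) :
    (σ.insertIdx j v).filter p = σ.filter p := by
  rw [insertIdx_eq_take_cons_drop v σ h, List.filter_append, List.filter_cons, hv]
  simp [← List.filter_append]

theorem indexOf_insertIdx {v : ℕ} {σ : List ℕ} {j : ℕ} (hv : v ∉ σ) (h : j ≤ σ.length) :
    (σ.insertIdx j v).idxOf v = j := by
  rw [insertIdx_eq_take_cons_drop v σ h, indexOf_middle (fun hm => hv (List.mem_of_mem_take hm)),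
    List.length_take, min_eq_left h]

theorem isPerm_length {l : List ℕ} {n : ℕ} (h : isPerm l n) : l.length = n := by
  simpa using h.length_eq

theorem isPerm_nodup {l : List ℕ} {n : ℕ} (h : isPerm l n) : l.Nodup := by
  refine h.nodup_iff.2 ?_
  exact (List.nodup_range).map (fun a b => by omega)

theorem mem_isPerm {l : List ℕ} {n : ℕ} (h : isPerm l n) {x : ℕ} (hx : x ∈ l) :
    1 ≤ x ∧ x ≤ n := by
  have := h.mem_iff.1 hx
  simp only [List.mem_map, List.mem_range] at this
  omega

theorem isPerm_mem {l : List ℕ} {n : ℕ} (h : isPerm l n) {x : ℕ} (h1 : 1 ≤ x) (h2 : x ≤ n) :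
    x ∈ l := by
  refine h.mem_iff.2 ?_
  simp only [List.mem_map, List.mem_range]
  exact ⟨x - 1, by omega, by omega⟩

theorem filter_all {l : List ℕ} {n m : ℕ} (h : isPerm l n) (hm : n ≤ m) :
    l.filter (· ≤ m) = l := by
  rw [List.filter_eq_self]
  intro a ha
  simpa using le_trans (mem_isPerm h ha).2 hm

theorem filter_filter_le (l : List ℕ) {k m : ℕ} (h : k ≤ m) :
    (l.filter (· ≤ m)).filter (· ≤ k) = l.filter (· ≤ k) := by
  rw [List.filter_filter]
  refine List.filter_congr fun a _ => ?_
  by_cases hk : a ≤ k <;> simp [hk] <;> omega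

theorem isPerm_filter {π : List ℕ} {n : ℕ} (h : isPerm π (n + 1)) :
    isPerm (π.filter (· ≤ n)) n := by
  have := h.filter (· ≤ n)
  refine this.trans ?_
  have : (List.range (n + 1)).map (· + 1) = ((List.range n).map (· + 1)) ++ [n + 1] := by
    rw [List.range_succ, List.map_append]; rfl
  rw [this, List.filter_append]
  have h1 : ((List.range n).map (· + 1)).filter (· ≤ n) = (List.range n).map (· + 1) := by
    rw [List.filter_eq_self]; intro a ha; simp only [List.mem_map, List.mem_range] at ha
    simp; omega
  have h2 : [n + 1].filter (fun x => decide (x ≤ n)) = [] := by simp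
  rw [h1, h2, List.append_nil]

theorem isPerm_insertIdx {σ : List ℕ} {n j : ℕ} (h : isPerm σ n) (hj : j ≤ n) :
    isPerm (σ.insertIdx j (n + 1)) (n + 1) := by
  have hlen : j ≤ σ.length := by rw [isPerm_length h]; exact hj
  refine (List.perm_insertIdx _ _ hlen).trans ?_
  have : (List.range (n + 1)).map (· + 1) = ((List.range n).map (· + 1)) ++ [n + 1] := by
    rw [List.range_succ, List.map_append]; rfl
  rw [this]
  exact (h.cons (n+1)).trans (List.perm_append_singleton _ _).symm

theorem des_eq_card (σ : List ℕ) :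
    des σ = ((Finset.Ico 1 σ.length).filter (fun j => isDescSpace σ j)).card := by
  unfold des desSet
  apply Finset.card_bij (fun i _ => i + 1)
  · intro i hi
    simp only [Finset.mem_filter, Finset.mem_range] at hi
    simp only [Finset.mem_filter, Finset.mem_Ico]
    simp only [isDescSpace]
    refine ⟨⟨by omega, by omega⟩, by omega, by omega, by simpa using hi.2⟩
  · intro i hi j hj h; omega
  · intro j hj
    simp only [Finset.mem_filter, Finset.mem_Ico] at hj
    simp only [isDescSpace] at hj
    refine ⟨j - 1, ?_, by omega⟩
    simp only [Finset.mem_filter, Finset.mem_range]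
    obtain ⟨⟨h1, h2⟩, _, h3, h4⟩ := hj
    constructor
    · omega
    · have : j - 1 + 1 = j := by omega
      rw [this]; exact h4

theorem not_desc_and_asc {σ : List ℕ} {j : ℕ} (hd : isDescSpace σ j) (ha : isAscSpace σ j) :
    False := by
  obtain ⟨_, _, h1⟩ := hd; obtain ⟨_, _, h2⟩ := ha; omega

theorem desc_or_asc {σ : List ℕ} (hN : σ.Nodup) {j : ℕ} (h1 : 1 ≤ j) (h2 : j < σ.length) :
    isDescSpace σ j ∨ isAscSpace σ j := by
  have hj1 : j - 1 < σ.length := by omega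
  have hne : σ[j] ≠ σ[j - 1] := by
    intro h
    have := (List.Nodup.getElem_inj_iff hN).1 h
    omega
  unfold isDescSpace isAscSpace
  rw [List.getD_eq_getElem σ 0 h2, List.getD_eq_getElem σ 0 hj1]
  rcases Nat.lt_or_ge σ[j] σ[j-1] with h | h
  · left; exact ⟨h1, h2, h⟩
  · right; refine ⟨h1, h2, by omega⟩

theorem asc_card_eq {σ : List ℕ} (hN : σ.Nodup) :
    ((Finset.Ico 1 σ.length).filter (fun j => isAscSpace σ j)).card
      = σ.length - 1 - des σ := by
  have key := Finset.card_filter_add_card_filter_not (s := Finset.Ico 1 σ.length)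
    (fun j => isDescSpace σ j)
  have heq : (Finset.Ico 1 σ.length).filter (fun j => ¬ isDescSpace σ j)
      = (Finset.Ico 1 σ.length).filter (fun j => isAscSpace σ j) := by
    apply Finset.filter_congr
    intro j hj
    simp only [Finset.mem_Ico] at hj
    rcases desc_or_asc hN hj.1 hj.2 with h | h
    · simp only [h, not_true, false_iff]
      exact fun ha => not_desc_and_asc h ha
    · simp only [h, iff_true]
      exact fun hd => not_desc_and_asc hd h
  rw [heq] at key
  rw [← des_eq_card] at key
  have : (Finset.Ico 1 σ.length).card = σ.length - 1 := by simp
  omega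

theorem statLabel_last (σ : List ℕ) : statLabel σ σ.length = des σ := by
  simp [statLabel]

theorem statLabel_desc {σ : List ℕ} {j : ℕ} (hd : isDescSpace σ j) :
    statLabel σ j = ((Finset.range j).filter (fun t => isDescSpace σ t)).card := by
  have : j ≠ σ.length := by have := hd.2.1; omega
  simp [statLabel, this, hd]

theorem statLabel_desc_lt_des {σ : List ℕ} {j : ℕ} (hd : isDescSpace σ j) :
    statLabel σ j < des σ := by
  rw [statLabel_desc hd, des_eq_card]
  apply Finset.card_lt_card
  constructor
  · intro t ht
    simp only [Finset.mem_filter, Finset.mem_range] at ht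
    simp only [Finset.mem_filter, Finset.mem_Ico]
    exact ⟨⟨ht.2.1, lt_trans ht.1 hd.2.1⟩, ht.2⟩
  · intro hsub
    have hj : j ∈ (Finset.Ico 1 σ.length).filter (fun t => isDescSpace σ t) := by
      simp only [Finset.mem_filter, Finset.mem_Ico]
      exact ⟨⟨hd.1, hd.2.1⟩, hd⟩
    have := hsub hj
    simp only [Finset.mem_filter, Finset.mem_range] at this
    omega

theorem statLabel_zero {σ : List ℕ} (h0 : 0 < σ.length) : statLabel σ 0 = des σ + 1 := by
  have h1 : (0 : ℕ) ≠ σ.length := by omega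
  have h2 : ¬ isDescSpace σ 0 := fun h => by have := h.1; omega
  simp [statLabel, h1, h2]

theorem statLabel_asc {σ : List ℕ} {j : ℕ} (ha : isAscSpace σ j) :
    statLabel σ j = des σ + 1 + ((Finset.Ico j σ.length).filter (fun t => isAscSpace σ t)).card := by
  have h1 : j ≠ σ.length := by have := ha.2.1; omega
  have h2 : ¬ isDescSpace σ j := fun h => not_desc_and_asc h ha
  have h3 : j ≠ 0 := by have := ha.1; omega
  simp [statLabel, h1, h2, h3]

theorem statLabel_asc_ge {σ : List ℕ} {j : ℕ} (ha : isAscSpace σ j) :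
    des σ + 2 ≤ statLabel σ j := by
  rw [statLabel_asc ha]
  have : j ∈ (Finset.Ico j σ.length).filter (fun t => isAscSpace σ t) := by
    simp only [Finset.mem_filter, Finset.mem_Ico]
    exact ⟨⟨le_rfl, ha.2.1⟩, ha⟩
  have := Finset.card_pos.2 ⟨j, this⟩
  omega

theorem statLabel_asc_le {σ : List ℕ} (hN : σ.Nodup) {j : ℕ} (ha : isAscSpace σ j) :
    statLabel σ j ≤ σ.length := by
  rw [statLabel_asc ha]
  have hsub : (Finset.Ico j σ.length).filter (fun t => isAscSpace σ t)
      ⊆ (Finset.Ico 1 σ.length).filter (fun t => isAscSpace σ t) := by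
    apply Finset.filter_subset_filter
    apply Finset.Ico_subset_Ico_left ha.1
  have := Finset.card_le_card hsub
  rw [asc_card_eq hN] at this
  have hn : 0 < σ.length := lt_of_le_of_lt (Nat.zero_le j) ha.2.1
  have hd : des σ ≤ σ.length - 1 := by
    rw [des_eq_card]
    have := Finset.card_filter_le (Finset.Ico 1 σ.length) (fun j => isDescSpace σ j)
    simpa using this
  omega

theorem des_le {σ : List ℕ} : des σ ≤ σ.length - 1 := by
  rw [des_eq_card]
  have := Finset.card_filter_le (Finset.Ico 1 σ.length) (fun j => isDescSpace σ j)
  simpa using this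

theorem statLabel_le {σ : List ℕ} (hN : σ.Nodup) {j : ℕ} (hj : j ≤ σ.length) :
    statLabel σ j ≤ σ.length := by
  rcases eq_or_lt_of_le hj with h | h
  · rw [h, statLabel_last]
    have := des_le (σ := σ); omega
  rcases Nat.eq_zero_or_pos j with h0 | h0
  · subst h0
    rw [statLabel_zero (by omega)]
    have := des_le (σ := σ); omega
  rcases desc_or_asc hN h0 h with hd | ha
  · have := statLabel_desc_lt_des hd
    have := des_le (σ := σ); omega
  · exact statLabel_asc_le hN ha

theorem statLabel_desc_strictMono {σ : List ℕ} {j1 j2 : ℕ} (h1 : isDescSpace σ j1)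
    (h2 : isDescSpace σ j2) (h : j1 < j2) : statLabel σ j1 < statLabel σ j2 := by
  rw [statLabel_desc h1, statLabel_desc h2]
  apply Finset.card_lt_card
  constructor
  · apply Finset.filter_subset_filter
    apply Finset.range_subset_range.2 h.le
  · intro hsub
    have hj : j1 ∈ (Finset.range j2).filter (fun t => isDescSpace σ t) := by
      simp only [Finset.mem_filter, Finset.mem_range]; exact ⟨h, h1⟩
    have := hsub hj
    simp only [Finset.mem_filter, Finset.mem_range] at this
    omega

theorem statLabel_asc_strictAnti {σ : List ℕ} {j1 j2 : ℕ} (h1 : isAscSpace σ j1)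
    (h2 : isAscSpace σ j2) (h : j1 < j2) : statLabel σ j2 < statLabel σ j1 := by
  rw [statLabel_asc h1, statLabel_asc h2]
  have : ((Finset.Ico j2 σ.length).filter (fun t => isAscSpace σ t)).card
      < ((Finset.Ico j1 σ.length).filter (fun t => isAscSpace σ t)).card := by
    apply Finset.card_lt_card
    constructor
    · apply Finset.filter_subset_filter
      apply Finset.Ico_subset_Ico_left h.le
    · intro hsub
      have hj : j1 ∈ (Finset.Ico j1 σ.length).filter (fun t => isAscSpace σ t) := by
        simp only [Finset.mem_filter, Finset.mem_Ico]
        exact ⟨⟨le_rfl, h1.2.1⟩, h1⟩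
      have := hsub hj
      simp only [Finset.mem_filter, Finset.mem_Ico] at this
      omega
  omega

theorem statLabel_injOn {σ : List ℕ} (hN : σ.Nodup) {j1 j2 : ℕ} (hj1 : j1 ≤ σ.length)
    (hj2 : j2 ≤ σ.length) (heq : statLabel σ j1 = statLabel σ j2) : j1 = j2 := by
  -- classify j into one of four classes
  by_contra hne
  -- wlog j1 < j2
  wlog hlt : j1 < j2 generalizing j1 j2
  · exact this hj2 hj1 heq.symm (Ne.symm hne) (by omega)
  have hn0 : 0 < σ.length := by omega
  have hdes := des_le (σ := σ)
  -- classify j2 (j2 > 0)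
  rcases eq_or_lt_of_le hj2 with h2n | h2n
  · -- j2 = length : label des σ
    rw [h2n, statLabel_last] at heq
    rcases Nat.eq_zero_or_pos j1 with h10 | h10
    · rw [h10, statLabel_zero hn0] at heq; omega
    rcases desc_or_asc hN h10 (by omega) with hd | ha
    · have := statLabel_desc_lt_des hd; omega
    · have := statLabel_asc_ge ha; omega
  rcases desc_or_asc hN (by omega) h2n with hd2 | ha2
  · -- j2 descent
    have hlab2 := statLabel_desc_lt_des hd2
    rcases Nat.eq_zero_or_pos j1 with h10 | h10
    · rw [h10, statLabel_zero hn0] at heq; omega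
    rcases desc_or_asc hN h10 (by omega) with hd1 | ha1
    · have := statLabel_desc_strictMono hd1 hd2 hlt; omega
    · have := statLabel_asc_ge ha1; omega
  · -- j2 ascent
    have hlab2 := statLabel_asc_ge ha2
    rcases Nat.eq_zero_or_pos j1 with h10 | h10
    · rw [h10, statLabel_zero hn0] at heq
      have := statLabel_asc_ge ha2; omega
    rcases desc_or_asc hN h10 (by omega) with hd1 | ha1
    · have := statLabel_desc_lt_des hd1; omega
    · have := statLabel_asc_strictAnti ha1 ha2 hlt; omega

theorem statLabel_surj {σ : List ℕ} (hN : σ.Nodup) {i : ℕ} (hi : i ≤ σ.length) :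
    ∃ j ≤ σ.length, statLabel σ j = i := by
  have himg : (Finset.range (σ.length + 1)).image (statLabel σ) = Finset.range (σ.length + 1) := by
    apply Finset.eq_of_subset_of_card_le
    · intro x hx
      simp only [Finset.mem_image, Finset.mem_range] at hx ⊢
      obtain ⟨j, hj, rfl⟩ := hx
      have := statLabel_le hN (j := j) (by omega)
      omega
    · rw [Finset.card_image_of_injOn]
      intro a ha b hb hab
      simp only [Finset.coe_range, Set.mem_Iio] at ha hb
      exact statLabel_injOn hN (by omega) (by omega) hab
  have : i ∈ (Finset.range (σ.length + 1)).image (statLabel σ) := by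
    rw [himg]; simp; omega
  simp only [Finset.mem_image, Finset.mem_range] at this
  obtain ⟨j, hj, hji⟩ := this
  exact ⟨j, by omega, hji⟩

theorem reconstruct {π : List ℕ} {n : ℕ} (h : isPerm π (n + 1)) :
    (π.filter (· ≤ n)).insertIdx (π.idxOf (n + 1)) (n + 1) = π := by
  have hlen : π.length = n + 1 := isPerm_length h
  have hmem : n + 1 ∈ π := isPerm_mem h (by omega) le_rfl
  have hidx : π.idxOf (n + 1) < π.length := List.idxOf_lt_length_iff.2 hmem
  set idx := π.idxOf (n + 1) with hidxdef
  have hg : π[idx] = n + 1 := List.getElem_idxOf hidx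
  have hdec : π = π.take idx ++ (n + 1) :: π.drop (idx + 1) := by
    have := eq_take_cons_drop π hidx
    rwa [hg] at this
  have hN : π.Nodup := isPerm_nodup h
  rw [hdec] at hN
  have hnt : n + 1 ∉ π.take idx := by
    rw [List.nodup_append] at hN
    exact fun hm => hN.2.2 _ hm _ List.mem_cons_self rfl
  have hnd : n + 1 ∉ π.drop (idx + 1) := by
    rw [List.nodup_append, List.nodup_cons] at hN
    exact hN.2.1.1
  have hft : (π.take idx).filter (· ≤ n) = π.take idx := by
    rw [List.filter_eq_self]
    intro a ha
    have h1 := (mem_isPerm h (List.mem_of_mem_take ha)).2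
    have h2 : a ≠ n + 1 := fun hc => hnt (hc ▸ ha)
    simp; omega
  have hfd : (π.drop (idx + 1)).filter (· ≤ n) = π.drop (idx + 1) := by
    rw [List.filter_eq_self]
    intro a ha
    have h1 := (mem_isPerm h (List.mem_of_mem_drop ha)).2
    have h2 : a ≠ n + 1 := fun hc => hnd (hc ▸ ha)
    simp; omega
  have hfilter : π.filter (· ≤ n) = π.take idx ++ π.drop (idx + 1) := by
    conv_lhs => rw [hdec]
    rw [List.filter_append, List.filter_cons]
    simp only [show (decide (n + 1 ≤ n)) = false from by simp, if_neg]
    rw [hft, hfd]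
    simp
  have hlt : idx ≤ (π.take idx ++ π.drop (idx + 1)).length := by
    rw [List.length_append, List.length_take, List.length_drop]
    omega
  rw [hfilter, insertIdx_eq_take_cons_drop _ _ hlt]
  have htl : (π.take idx).length = idx := by rw [List.length_take]; omega
  rw [List.take_append, htl, List.take_take]
  simp only [min_self, Nat.sub_self, List.take_zero, List.append_nil]
  rw [List.drop_append, htl, List.drop_take]
  simp only [Nat.sub_self, List.drop_zero, List.take_zero, List.nil_append]
  exact hdec.symm

theorem statTable_decomp {π : List ℕ} {n : ℕ} (h : isPerm π (n + 1)) :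
    statTable π = statTable (π.filter (· ≤ n))
      ++ [statLabel (π.filter (· ≤ n)) (π.idxOf (n + 1))] := by
  have hlen : π.length = n + 1 := isPerm_length h
  have hπ' : isPerm (π.filter (· ≤ n)) n := isPerm_filter h
  have hlen' : (π.filter (· ≤ n)).length = n := isPerm_length hπ'
  unfold statTable
  rw [hlen, hlen', List.range_succ, List.map_append]
  congr 1
  · apply List.map_congr_left
    intro k hk
    rw [List.mem_range] at hk
    rcases Nat.eq_zero_or_pos k with h0 | h0
    · simp [h0]
    have e1 : π.filter (· ≤ k) = (π.filter (· ≤ n)).filter (· ≤ k) :=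
      (filter_filter_le π (by omega)).symm
    have e2 : π.filter (· ≤ k + 1) = (π.filter (· ≤ n)).filter (· ≤ k + 1) :=
      (filter_filter_le π (by omega)).symm
    simp only [Nat.pos_iff_ne_zero.1 h0, if_neg]
    rw [e1, e2]
  · simp only [List.map_cons, List.map_nil]
    congr 1
    rcases Nat.eq_zero_or_pos n with h0 | h0
    · subst h0
      simp only [if_pos rfl]
      -- π = [1]
      have hmem : 1 ∈ π := isPerm_mem h le_rfl le_rfl
      have hidx : π.idxOf 1 < π.length := List.idxOf_lt_length_iff.2 hmem
      have hidx0 : π.idxOf 1 = 0 := by omega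
      have hf : π.filter (· ≤ 0) = [] := by
        rw [List.filter_eq_nil_iff]
        intro a ha
        have := (mem_isPerm h ha).1
        simp; omega
      rw [hidx0, hf]
      simp [statLabel, des, desSet]
    · rw [if_neg (by omega), filter_all h le_rfl]

theorem statTable_length (l : List ℕ) : (statTable l).length = l.length := by
  simp [statTable]

theorem main (n : ℕ) :
    Set.BijOn statTable {l | isPerm l n} {w | memE w n} := by
  induction n with
  | zero =>
    have hset : {l : List ℕ | isPerm l 0} = {([] : List ℕ)} := by
      ext l
      simp only [Set.mem_setOf_eq, Set.mem_singleton_iff, isPerm]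
      constructor
      · intro h
        simpa using h.length_eq
      · rintro rfl; simp [isPerm]
    rw [hset]
    refine ⟨?_, ?_, ?_⟩
    · rintro l rfl
      exact ⟨by simp [statTable], by omega⟩
    · rintro l rfl l' rfl _
      rfl
    · rintro w ⟨hw1, _⟩
      have : w = [] := List.length_eq_zero_iff.1 hw1
      subst this
      exact ⟨[], rfl, by simp [statTable]⟩
  | succ n ih =>
    obtain ⟨ihMap, ihInj, ihSurj⟩ := ih
    refine ⟨?_, ?_, ?_⟩
    · -- MapsTo
      intro π hπ
      simp only [Set.mem_setOf_eq] at hπ ⊢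
      have hdec := statTable_decomp hπ
      have hπ' := isPerm_filter hπ
      have hN' := isPerm_nodup hπ'
      have hlen' := isPerm_length hπ'
      obtain ⟨hw1, hw2⟩ := ihMap hπ'
      have hstlen : (statTable (π.filter (· ≤ n))).length = n := by
        rw [statTable_length]; exact hlen'
      have hidx : π.idxOf (n + 1) ≤ n := by
        have := List.idxOf_lt_length_iff.2 (isPerm_mem hπ (by omega) le_rfl)
        rw [isPerm_length hπ] at this; omega
      constructor
      · rw [hdec, List.length_append, hstlen]; simp
      · intro k hk
        rw [hdec]
        rcases Nat.lt_or_ge k n with h | h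
        · rw [List.getD_append _ _ _ _ (by omega)]
          exact hw2 k h
        · have hkn : k = n := by omega
          have : (statTable (π.filter (· ≤ n))
              ++ [statLabel (π.filter (· ≤ n)) (π.idxOf (n + 1))]).getD k 0
              = statLabel (π.filter (· ≤ n)) (π.idxOf (n + 1)) := by
            rw [List.getD_eq_getElem _ _ (by rw [List.length_append, hstlen]; simp; omega)]
            rw [List.getElem_append_right (by omega)]
            simp [hstlen]
          rw [this]
          have := statLabel_le hN' (j := π.idxOf (n + 1)) (by omega)
          omega
    · -- InjOn
      intro π hπ τ hτ heq
      simp only [Set.mem_setOf_eq] at hπ hτ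
      rw [statTable_decomp hπ, statTable_decomp hτ] at heq
      have hlenp : (statTable (π.filter (· ≤ n))).length
          = (statTable (τ.filter (· ≤ n))).length := by
        rw [statTable_length, statTable_length, isPerm_length (isPerm_filter hπ),
          isPerm_length (isPerm_filter hτ)]
      obtain ⟨h1, h2⟩ := List.append_inj heq hlenp
      have hfeq : π.filter (· ≤ n) = τ.filter (· ≤ n) :=
        ihInj (isPerm_filter hπ) (isPerm_filter hτ) h1
      have h3 : statLabel (π.filter (· ≤ n)) (π.idxOf (n + 1))
          = statLabel (π.filter (· ≤ n)) (τ.idxOf (n + 1)) := by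
        rw [List.cons.injEq] at h2
        rw [h2.1, hfeq]
      have hidxπ : π.idxOf (n + 1) ≤ (π.filter (· ≤ n)).length := by
        rw [isPerm_length (isPerm_filter hπ)]
        have := List.idxOf_lt_length_iff.2 (isPerm_mem hπ (by omega) le_rfl)
        rw [isPerm_length hπ] at this; omega
      have hidxτ : τ.idxOf (n + 1) ≤ (π.filter (· ≤ n)).length := by
        rw [isPerm_length (isPerm_filter hπ)]
        have := List.idxOf_lt_length_iff.2 (isPerm_mem hτ (by omega) le_rfl)
        rw [isPerm_length hτ] at this; omega
      have hidxeq : π.idxOf (n + 1) = τ.idxOf (n + 1) :=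
        statLabel_injOn (isPerm_nodup (isPerm_filter hπ)) hidxπ hidxτ h3
      calc π = (π.filter (· ≤ n)).insertIdx (π.idxOf (n + 1)) (n + 1) :=
              (reconstruct hπ).symm
        _ = (τ.filter (· ≤ n)).insertIdx (τ.idxOf (n + 1)) (n + 1) := by
              rw [hfeq, hidxeq]
        _ = τ := reconstruct hτ
    · -- SurjOn
      intro w hw
      simp only [Set.mem_setOf_eq] at hw
      obtain ⟨hwl, hwb⟩ := hw
      have hne : w ≠ [] := by
        intro h; rw [h] at hwl; simp at hwl
      set w' := w.dropLast with hw'def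
      set a := w.getLast hne with hadef
      have hdecw : w' ++ [a] = w := List.dropLast_append_getLast hne
      have hw'len : w'.length = n := by
        rw [hw'def, List.length_dropLast, hwl]
        omega
      have ha : a ≤ n := by
        have hgl : a = w.getD n 0 := by
          rw [hadef, List.getLast_eq_getElem, List.getD_eq_getElem _ _ (by omega)]
          congr 1; omega
        rw [hgl]; exact hwb n (by omega)
      have hw'mem : memE w' n := by
        refine ⟨hw'len, fun k hk => ?_⟩
        have : w.getD k 0 = w'.getD k 0 := by
          conv_lhs => rw [← hdecw]
          rw [List.getD_append _ _ _ _ (by omega)]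
        rw [← this]; exact hwb k (by omega)
      obtain ⟨π', hπ'mem, hst'⟩ := ihSurj hw'mem
      simp only [Set.mem_setOf_eq] at hπ'mem
      have hN' := isPerm_nodup hπ'mem
      have hlen' := isPerm_length hπ'mem
      obtain ⟨j, hj, hjlab⟩ := statLabel_surj hN' (i := a) (by omega)
      rw [hlen'] at hj
      set π := π'.insertIdx j (n + 1) with hπdef
      have hπperm : isPerm π (n + 1) := isPerm_insertIdx hπ'mem hj
      refine ⟨π, hπperm, ?_⟩
      have hfilt : π.filter (· ≤ n) = π' := by
        rw [hπdef]
        have : π'.filter (· ≤ n) = π' := filter_all hπ'mem le_rfl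
        rw [filter_insertIdx (by simp) (by omega), this]
      have hidx : π.idxOf (n + 1) = j := by
        rw [hπdef]
        apply indexOf_insertIdx
        · intro hmem
          have := (mem_isPerm hπ'mem hmem).2; omega
        · omega
      rw [statTable_decomp hπperm, hfilt, hidx, hst', hjlab, hdecw]

end BSAux
/-- the stat table is a bijection from Sₙ onto Eₙ. -/
theorem statTable_bijOn (n : ℕ) :
    Set.BijOn BS.statTable {l | BS.isPerm l n} {w | BS.memE w n} := BSAux.main n
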